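/- Let B = conv((B²₂ × {0}) ∪ {(0,0,±1)}) ⊂ ℝ³ with associated norm ‖·‖_B, and let T be the triangle with vertices (√3/2, -1/2, 0), (-√3/2, -1/2, 0), (0, 1, 0). Then the translated scaled triangle T* = (1/√3)·T + (0, 0, (√3-1)/√3) is inscribed in B (all three vertices satisfy ‖v‖_B = 1) and has side length 1 in ‖·‖_B. -/

import Mathlib

open Set

open Pointwise

/-- The Euclidean unit disk in the horizontal plane of `ℝ³`. -/
def diskSet : Set (Fin 3 → ℝ) := {p | p 0 ^ 2 + p 1 ^ 2 ≤ 1 ∧ p 2 = 0}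

/-- The double cone over the Euclidean unit disk with apexes `(0,0,±1)`. -/
def Bcone : Set (Fin 3 → ℝ) :=
  convexHull ℝ (diskSet ∪ ({![0, 0, 1], ![0, 0, -1]} : Set (Fin 3 → ℝ)))

noncomputable def fB (p : Fin 3 → ℝ) : ℝ := Real.sqrt (p 0 ^ 2 + p 1 ^ 2) + |p 2|

lemma sqrt_add_le (x1 y1 x2 y2 : ℝ) :
    Real.sqrt ((x1 + x2) ^ 2 + (y1 + y2) ^ 2) ≤
      Real.sqrt (x1 ^ 2 + y1 ^ 2) + Real.sqrt (x2 ^ 2 + y2 ^ 2) := by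
  have hP : (0:ℝ) ≤ x1 ^ 2 + y1 ^ 2 := by positivity
  have hQ : (0:ℝ) ≤ x2 ^ 2 + y2 ^ 2 := by positivity
  have hcs : x1 * x2 + y1 * y2 ≤
      Real.sqrt (x1 ^ 2 + y1 ^ 2) * Real.sqrt (x2 ^ 2 + y2 ^ 2) := by
    calc x1 * x2 + y1 * y2 ≤ |x1 * x2 + y1 * y2| := le_abs_self _
      _ = Real.sqrt ((x1 * x2 + y1 * y2) ^ 2) := (Real.sqrt_sq_eq_abs _).symm
      _ ≤ Real.sqrt ((x1 ^ 2 + y1 ^ 2) * (x2 ^ 2 + y2 ^ 2)) :=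
          Real.sqrt_le_sqrt (by nlinarith [sq_nonneg (x1 * y2 - y1 * x2)])
      _ = _ := Real.sqrt_mul hP _
  have h1 := Real.sq_sqrt hP
  have h2 := Real.sq_sqrt hQ
  have key : (x1 + x2) ^ 2 + (y1 + y2) ^ 2 ≤
      (Real.sqrt (x1 ^ 2 + y1 ^ 2) + Real.sqrt (x2 ^ 2 + y2 ^ 2)) ^ 2 := by
    nlinarith [h1, h2, hcs]
  calc Real.sqrt ((x1 + x2) ^ 2 + (y1 + y2) ^ 2) ≤
      Real.sqrt ((Real.sqrt (x1 ^ 2 + y1 ^ 2) + Real.sqrt (x2 ^ 2 + y2 ^ 2)) ^ 2) :=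
        Real.sqrt_le_sqrt key
    _ = _ := Real.sqrt_sq (by positivity)

lemma fB_smul {r : ℝ} (hr : 0 ≤ r) (p : Fin 3 → ℝ) : fB (r • p) = r * fB p := by
  simp only [fB, Pi.smul_apply, smul_eq_mul, mul_pow]
  rw [show r ^ 2 * p 0 ^ 2 + r ^ 2 * p 1 ^ 2 = r ^ 2 * (p 0 ^ 2 + p 1 ^ 2) by ring,
    Real.sqrt_mul (by positivity), Real.sqrt_sq hr, abs_mul, abs_of_nonneg hr]
  ring

lemma Bcone_subset : Bcone ⊆ {p | fB p ≤ 1} := by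
  apply convexHull_min
  · rintro p (⟨h1, h2⟩ | hp)
    · simp only [mem_setOf_eq, fB, h2, abs_zero, add_zero]
      calc Real.sqrt (p 0 ^ 2 + p 1 ^ 2) ≤ Real.sqrt 1 := Real.sqrt_le_sqrt h1
        _ = 1 := Real.sqrt_one
    · rcases hp with rfl | rfl <;> simp [fB]
  · intro p hp q hq a b ha hb hab
    simp only [mem_setOf_eq] at hp hq ⊢
    have h3 : fB (a • p + b • q) ≤ a * fB p + b * fB q := by
      simp only [fB, Pi.add_apply, Pi.smul_apply, smul_eq_mul]
      have h := sqrt_add_le (a * p 0) (a * p 1) (b * q 0) (b * q 1)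
      have e1 : Real.sqrt ((a * p 0) ^ 2 + (a * p 1) ^ 2) =
          a * Real.sqrt (p 0 ^ 2 + p 1 ^ 2) := by
        rw [show (a * p 0) ^ 2 + (a * p 1) ^ 2 = a ^ 2 * (p 0 ^ 2 + p 1 ^ 2) by ring,
          Real.sqrt_mul (by positivity), Real.sqrt_sq ha]
      have e2 : Real.sqrt ((b * q 0) ^ 2 + (b * q 1) ^ 2) =
          b * Real.sqrt (q 0 ^ 2 + q 1 ^ 2) := by
        rw [show (b * q 0) ^ 2 + (b * q 1) ^ 2 = b ^ 2 * (q 0 ^ 2 + q 1 ^ 2) by ring,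
          Real.sqrt_mul (by positivity), Real.sqrt_sq hb]
      rw [e1, e2] at h
      have habs : |a * p 2 + b * q 2| ≤ a * |p 2| + b * |q 2| := by
        calc |a * p 2 + b * q 2| ≤ |a * p 2| + |b * q 2| := abs_add_le _ _
          _ = a * |p 2| + b * |q 2| := by
              rw [abs_mul, abs_mul, abs_of_nonneg ha, abs_of_nonneg hb]
      linarith
    have h4 : a * fB p + b * fB q ≤ a * 1 + b * 1 :=
      add_le_add (mul_le_mul_of_nonneg_left hp ha) (mul_le_mul_of_nonneg_left hq hb)
    have h5 : a * 1 + b * 1 = 1 := by rw [mul_one, mul_one, hab]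
    linarith

lemma gauge_Bcone_eq_one {p : Fin 3 → ℝ} (hmem : p ∈ Bcone) (hf : fB p = 1) :
    gauge Bcone p = 1 := by
  apply le_antisymm
  · exact gauge_le_of_mem zero_le_one (by rw [one_smul]; exact hmem)
  · rw [gauge_def]
    apply le_csInf ⟨1, Set.mem_sep (Set.mem_Ioi.mpr one_pos) (by rw [one_smul]; exact hmem)⟩
    rintro r ⟨hr, hx⟩
    rw [Set.mem_Ioi] at hr
    rw [Set.mem_smul_set] at hx
    obtain ⟨q, hq, rfl⟩ := hx
    have hq1 : fB q ≤ 1 := Bcone_subset hq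
    have h2 : fB (r • q) = r * fB q := fB_smul (le_of_lt hr) q
    rw [hf] at h2
    nlinarith

/-- Vertices of the equilateral triangle `T` in the horizontal plane. -/
noncomputable def vT : Fin 3 → (Fin 3 → ℝ) :=
  ![![Real.sqrt 3 / 2, -(1 / 2 : ℝ), 0], ![-(Real.sqrt 3 / 2), -(1 / 2 : ℝ), 0], ![0, 1, 0]]

/-- Vertices of the triangle `T⋆ = (1/√3)·T + (0,0,(√3-1)/√3)`. -/
noncomputable def wT : Fin 3 → (Fin 3 → ℝ) :=
  fun i => (1 / Real.sqrt 3) • vT i + ![0, 0, (Real.sqrt 3 - 1) / Real.sqrt 3]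

/-- The triangle `T⋆` is inscribed in `B` and has side length 1 in the gauge norm. -/
theorem triangle_Tstar_inscribed_side_one :
    (∀ i, gauge Bcone (wT i) = 1) ∧
    (∀ i j, i ≠ j → gauge Bcone (wT i - wT j) = 1) := by
  have hs3 : Real.sqrt 3 ^ 2 = 3 := Real.sq_sqrt (by norm_num)
  have hs0 : (0:ℝ) < Real.sqrt 3 := Real.sqrt_pos.mpr (by norm_num)
  have hs1 : (1:ℝ) ≤ Real.sqrt 3 := by nlinarith
  have hsne : Real.sqrt 3 ≠ 0 := ne_of_gt hs0
  have hdisk : ∀ i, vT i ∈ diskSet := by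
    intro i
    fin_cases i <;>
      refine ⟨?_, by simp [vT]⟩ <;>
      norm_num [vT, Matrix.vecHead, Matrix.vecTail] <;> nlinarith
  have hapex : (![0, 0, 1] : Fin 3 → ℝ) ∈
      diskSet ∪ ({![0, 0, 1], ![0, 0, -1]} : Set (Fin 3 → ℝ)) :=
    Or.inr (mem_insert _ _)
  have hW : ∀ i, wT i = (1 / Real.sqrt 3) • vT i +
      ((Real.sqrt 3 - 1) / Real.sqrt 3) • ![0, 0, 1] := by
    intro i
    unfold wT
    congr 1
    funext k
    fin_cases k <;> simp
  have hbnn : (0:ℝ) ≤ (Real.sqrt 3 - 1) / Real.sqrt 3 :=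
    div_nonneg (by linarith) hs0.le
  have hmemW : ∀ i, wT i ∈ Bcone := by
    intro i
    rw [hW i]
    exact (convex_convexHull ℝ
        (diskSet ∪ ({![0, 0, 1], ![0, 0, -1]} : Set (Fin 3 → ℝ))))
      (subset_convexHull ℝ _ (Set.mem_union_left _ (hdisk i)))
      (subset_convexHull ℝ _ hapex)
      (by positivity) hbnn
      (by rw [← add_div, show 1 + (Real.sqrt 3 - 1) = Real.sqrt 3 by ring]
          exact div_self hsne)
  have hx : ∀ i, (wT i 0) ^ 2 + (wT i 1) ^ 2 = 1 / 3 := by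
    intro i
    fin_cases i <;> simp [wT, vT] <;> field_simp <;> nlinarith
  have hz : ∀ i, wT i 2 = (Real.sqrt 3 - 1) / Real.sqrt 3 := by
    intro i; fin_cases i <;> simp [wT, vT]
  have hfW : ∀ i, fB (wT i) = 1 := by
    intro i
    rw [fB, hx i, hz i, show (1/3:ℝ) = 3⁻¹ by norm_num, Real.sqrt_inv,
      abs_of_nonneg hbnn]
    field_simp
    ring
  constructor
  · intro i
    exact gauge_Bcone_eq_one (hmemW i) (hfW i)
  · intro i j hij
    have key : ∀ p : Fin 3 → ℝ, p 0 ^ 2 + p 1 ^ 2 = 1 → p 2 = 0 →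
        gauge Bcone p = 1 := by
      intro p h0 h2
      refine gauge_Bcone_eq_one (subset_convexHull ℝ _ (Set.mem_union_left _ ⟨le_of_eq h0, h2⟩)) ?_
      rw [fB, h0, h2, Real.sqrt_one, abs_zero, add_zero]
    fin_cases i <;> fin_cases j <;>
      first
        | exact absurd rfl hij
        | (apply key <;> simp [wT, vT, Matrix.vecHead, Matrix.vecTail] <;>
            field_simp <;> first
              | linear_combination (-12 * Real.sqrt 3 ^ 2) * hs3
              | linear_combination (-12 : ℝ) * hs3
              | (norm_num; done)
              | nlinarith)
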